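/- arXiv:2112.06090 — 3 statements merged into one kernel-verified Lean document; each statement's English description precedes it below -/
import Mathlib

section
/- Let H be a measurable group and let μ be a probability measure on H with μ({e}) > 0, where e is the identity element. Then the total variation norm ‖μ^n − μ^{n+1}‖ tends to 0 as n → ∞. -/
open MeasureTheory Filter Topology
open scoped ENNReal NNReal

/-- The `n`-fold convolution power of a measure on a measurable group,
with `μ^0` the Dirac mass at the identity. -/
noncomputable def convPow {H : Type*} [Group H] [MeasurableSpace H]
    (μ : Measure H) : ℕ → Measure H
  | 0 => Measure.dirac 1
  | n + 1 => (convPow μ n).mconv μ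

instance convPow.isProbabilityMeasure {H : Type*} [Group H] [MeasurableSpace H]
    [MeasurableMul₂ H] (μ : Measure H) [IsProbabilityMeasure μ] :
    ∀ n, IsProbabilityMeasure (convPow μ n)
  | 0 => by rw [convPow]; infer_instance
  | n + 1 => by
      rw [convPow]
      have := convPow.isProbabilityMeasure μ n
      infer_instance

set_option linter.unusedSectionVars false
set_option linter.deprecated false
set_option linter.unreachableTactic false
set_option linter.unusedTactic false

namespace StmtAux

/-- binomial coefficients -/
noncomputable def bcoef {R : Type*} [CommSemiring R] (pn qn : R) (n j : ℕ) : R :=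
  (n.choose j : R) * pn^(n-j) * qn^j

lemma bcoef_pascal {R : Type*} [CommSemiring R] (pn qn : R) (n : ℕ) : ∀ j, j ≤ n + 1 →
    bcoef pn qn (n+1) j
      = pn * bcoef pn qn n j + qn * (if j = 0 then 0 else bcoef pn qn n (j-1)) := by
  intro j hj
  rcases j with _ | i
  · simp [bcoef, pow_succ, mul_comm, mul_assoc, mul_left_comm]
  · simp only [bcoef, if_neg (Nat.succ_ne_zero i), Nat.add_sub_cancel]
    rw [Nat.choose_succ_succ, Nat.succ_sub_succ]
    push_cast
    rcases Nat.lt_or_ge i n with hi | hi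
    · have h1 : n - i = (n - (i+1)) + 1 := by omega
      rw [h1]
      ring
    · have h2 : i = n := by omega
      rw [h2, Nat.choose_succ_self, Nat.sub_self, Nat.choose_self]
      push_cast
      ring


section MeasureSide

variable {H : Type*} [Group H] [MeasurableSpace H] [MeasurableMul₂ H]

instance sum_sfinite {ι : Type*} (t : Finset ι) (f : ι → Measure H)
    [∀ i, SFinite (f i)] : SFinite (∑ i ∈ t, f i) := by
  classical
  induction t using Finset.induction with
  | empty => simpa using inferInstanceAs (SFinite (0 : Measure H))
  | insert _ _ hx ih => rw [Finset.sum_insert hx]; infer_instance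

lemma smul_mconv (c : ℝ≥0∞) (μ ν : Measure H) [SFinite μ] [SFinite ν] :
    (c • μ).mconv ν = c • μ.mconv ν := by
  unfold Measure.mconv
  rw [← Measure.map_smul]
  congr 1
  ext s hs
  rw [Measure.prod_apply hs, Measure.smul_apply, Measure.prod_apply hs,
    lintegral_smul_measure]

lemma mconv_smul (c : ℝ≥0∞) (μ ν : Measure H) [SFinite μ] [SFinite ν] :
    μ.mconv (c • ν) = c • μ.mconv ν := by
  unfold Measure.mconv
  rw [← Measure.map_smul]
  congr 1
  ext s hs
  rw [Measure.prod_apply hs, Measure.smul_apply, Measure.prod_apply hs,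
    smul_eq_mul, ← lintegral_const_mul _ (measurable_measure_prodMk_left hs)]
  simp

lemma sum_mconv {ι : Type*} (t : Finset ι) (f : ι → Measure H)
    [∀ i, SFinite (f i)] (ρ : Measure H) [SFinite ρ] :
    (∑ i ∈ t, f i).mconv ρ = ∑ i ∈ t, (f i).mconv ρ := by
  classical
  induction t using Finset.induction with
  | empty => simp
  | insert _ _ hx ih =>
    rw [Finset.sum_insert hx, Finset.sum_insert hx, Measure.add_mconv, ih]


lemma convPow_eq_sum (ν : Measure H) [IsProbabilityMeasure ν] (pn qn : ℝ≥0)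
    {μ : Measure H}
    (hμ : μ = (pn : ℝ≥0∞) • Measure.dirac 1 + (qn : ℝ≥0∞) • ν) (n : ℕ) :
    convPow μ n = ∑ j ∈ Finset.range (n+1),
      ((bcoef pn qn n j : ℝ≥0) : ℝ≥0∞) • convPow ν j := by
  have hsf : SFinite μ := by rw [hμ]; infer_instance
  induction n with
  | zero => simp [convPow, bcoef]
  | succ n ih =>
    have hconv : ∀ j, (convPow ν j).mconv μ
        = (pn : ℝ≥0∞) • convPow ν j + (qn : ℝ≥0∞) • convPow ν (j+1) := by
      intro j
      rw [hμ, Measure.mconv_add, mconv_smul, mconv_smul, Measure.mconv_dirac_one]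
      rfl
    rw [show convPow μ (n+1) = (convPow μ n).mconv μ from rfl, ih, sum_mconv]
    have step : ∀ j ∈ Finset.range (n+1),
        (((bcoef pn qn n j : ℝ≥0) : ℝ≥0∞) • convPow ν j).mconv μ
        = ((pn * bcoef pn qn n j : ℝ≥0) : ℝ≥0∞) • convPow ν j
          + ((qn * bcoef pn qn n j : ℝ≥0) : ℝ≥0∞) • convPow ν (j+1) := by
      intro j _
      rw [smul_mconv, hconv, smul_add, smul_smul, smul_smul]
      push_cast
      rw [mul_comm (ENNReal.ofNNReal pn) _, mul_comm (ENNReal.ofNNReal qn) _]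
    rw [Finset.sum_congr rfl step, Finset.sum_add_distrib]
    have e1 : ∑ j ∈ Finset.range (n+1), ((pn * bcoef pn qn n j : ℝ≥0) : ℝ≥0∞) • convPow ν j
        = ∑ j ∈ Finset.range (n+2), ((pn * bcoef pn qn n j : ℝ≥0) : ℝ≥0∞) • convPow ν j := by
      rw [Finset.sum_range_succ (n := n+1)]
      have : bcoef pn qn n (n+1) = 0 := by simp [bcoef, Nat.choose_succ_self]
      simp [this]
    have e2 : ∑ j ∈ Finset.range (n+1), ((qn * bcoef pn qn n j : ℝ≥0) : ℝ≥0∞) • convPow ν (j+1)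
        = ∑ j ∈ Finset.range (n+2),
            ((qn * (if j = 0 then 0 else bcoef pn qn n (j-1)) : ℝ≥0) : ℝ≥0∞) • convPow ν j := by
      rw [Finset.sum_range_succ' (fun j =>
        ((qn * (if j = 0 then 0 else bcoef pn qn n (j-1)) : ℝ≥0) : ℝ≥0∞) • convPow ν j) (n+1)]
      simp
    rw [e1, e2, ← Finset.sum_add_distrib]
    refine Finset.sum_congr rfl fun j hj => ?_
    rw [← add_smul, bcoef_pascal pn qn n j (by simpa using Nat.lt_succ_iff.mp (Finset.mem_range.mp hj))]
    push_cast
    ring_nf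


lemma exists_decomp (μ : Measure H) [IsProbabilityMeasure μ]
    (he : 0 < μ {1}) (hlt : μ {1} < 1) :
    ∃ (ν : Measure H) (pn qn : ℝ≥0), IsProbabilityMeasure ν ∧ 0 < pn ∧ 0 < qn
      ∧ pn + qn = 1
      ∧ μ = (pn : ℝ≥0∞) • Measure.dirac 1 + (qn : ℝ≥0∞) • ν := by
  set p : ℝ≥0∞ := μ {1} with hp
  have hp1 : p ≤ 1 := (measure_mono (Set.subset_univ _)).trans_eq measure_univ
  have hptop : p ≠ ⊤ := (hp1.trans_lt ENNReal.one_lt_top).ne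
  set q : ℝ≥0∞ := 1 - p with hq
  have hq0 : q ≠ 0 := by
    rw [hq]
    simp only [ne_eq, tsub_eq_zero_iff_le, not_le]
    exact hlt
  have hqtop : q ≠ ⊤ := (tsub_le_self.trans_lt ENNReal.one_lt_top).ne
  have hle : (p • Measure.dirac (1 : H)) ≤ μ := by
    rw [Measure.le_iff]
    intro s hs
    rw [Measure.smul_apply, smul_eq_mul, Measure.dirac_apply' _ hs]
    by_cases h1 : (1:H) ∈ s
    · rw [Set.indicator_of_mem h1]
      simp only [Pi.one_apply, mul_one]
      exact measure_mono (Set.singleton_subset_iff.mpr h1)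
    · rw [Set.indicator_of_notMem h1, mul_zero]
      exact zero_le
  haveI hfin : IsFiniteMeasure (p • Measure.dirac (1:H)) := by
    constructor
    rw [Measure.smul_apply, smul_eq_mul]
    calc p * Measure.dirac (1:H) Set.univ ≤ 1 * 1 := by
          apply mul_le_mul' hp1
          simp
      _ < ⊤ := by simp
  have hsub := Measure.sub_add_cancel_of_le hle
  set ρ : Measure H := μ - p • Measure.dirac 1 with hρ
  have hρuniv : ρ Set.univ = q := by
    have := congrArg (fun m : Measure H => m Set.univ) hsub
    simp only [Measure.add_apply, Measure.smul_apply, smul_eq_mul] at this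
    rw [Measure.dirac_apply' _ MeasurableSet.univ] at this
    simp only [Set.indicator_of_mem (Set.mem_univ _), Pi.one_apply, mul_one,
      measure_univ] at this
    rw [hq]
    exact ENNReal.eq_sub_of_add_eq hptop this
  set ν : Measure H := q⁻¹ • ρ with hν
  have hνuniv : ν Set.univ = 1 := by
    rw [hν, Measure.smul_apply, smul_eq_mul, hρuniv, ENNReal.inv_mul_cancel hq0 hqtop]
  have hqν : q • ν = ρ := by
    rw [hν, smul_smul, ENNReal.mul_inv_cancel hq0 hqtop, one_smul]
  have hμeq : μ = p • Measure.dirac 1 + q • ν := by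
    rw [hqν, add_comm]
    exact hsub.symm
  refine ⟨ν, p.toNNReal, q.toNNReal, ⟨hνuniv⟩, ?_, ?_, ?_, ?_⟩
  · exact ENNReal.toNNReal_pos he.ne' hptop
  · exact ENNReal.toNNReal_pos hq0 hqtop
  · have hpq : p + q = 1 := by
      rw [hq, add_tsub_cancel_of_le hp1]
    have := congrArg ENNReal.toNNReal hpq
    rwa [ENNReal.toNNReal_add hptop hqtop, ENNReal.toNNReal_one] at this
  · rw [ENNReal.coe_toNNReal hptop, ENNReal.coe_toNNReal hqtop]
    exact hμeq


end MeasureSide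

section TV
variable {H : Type*} [MeasurableSpace H]

lemma coe_mk_le {x : ℝ} (hx : 0 ≤ x) {c : ℝ≥0∞} (hc : c ≠ ⊤) (h : x ≤ c.toReal) :
    (ENNReal.ofNNReal ⟨x, hx⟩) ≤ c := by
  have h1 : (⟨x, hx⟩ : ℝ≥0) = x.toNNReal := by
    ext; simp [Real.toNNReal, max_eq_left hx]
  rw [h1, ← ENNReal.ofReal, ← ENNReal.ofReal_toReal hc]
  exact ENNReal.ofReal_le_ofReal h

lemma tv_sub_le (α β : Measure H) [IsFiniteMeasure α] [IsFiniteMeasure β] :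
    (α.toSignedMeasure - β.toSignedMeasure).totalVariation Set.univ
      ≤ α Set.univ + β Set.univ := by
  set s := α.toSignedMeasure - β.toSignedMeasure with hs
  obtain ⟨i, hi₁, hi₂, hi₃, hpos, hneg⟩ := s.toJordanDecomposition_spec
  rw [SignedMeasure.totalVariation, Measure.add_apply, hpos, hneg,
    SignedMeasure.toMeasureOfZeroLE_apply _ hi₂ hi₁ MeasurableSet.univ,
    SignedMeasure.toMeasureOfLEZero_apply _ hi₃ hi₁.compl MeasurableSet.univ]
  have key : ∀ (j : Set H), MeasurableSet j → s j ≤ (α Set.univ).toReal ∧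
      -s j ≤ (β Set.univ).toReal := by
    intro j hj
    rw [hs, VectorMeasure.sub_apply, Measure.toSignedMeasure_apply_measurable hj,
      Measure.toSignedMeasure_apply_measurable hj, measureReal_def, measureReal_def]
    have h1 := ENNReal.toReal_mono (measure_ne_top α Set.univ)
      (measure_mono (Set.subset_univ j) : α j ≤ α Set.univ)
    have h2 := ENNReal.toReal_mono (measure_ne_top β Set.univ)
      (measure_mono (Set.subset_univ j) : β j ≤ β Set.univ)
    constructor <;> [skip; skip] <;>
      [have h0 : (0:ℝ) ≤ (β j).toReal := ENNReal.toReal_nonneg;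
       have h0 : (0:ℝ) ≤ (α j).toReal := ENNReal.toReal_nonneg] <;> linarith
  gcongr
  · exact coe_mk_le _ (measure_ne_top _ _) ((key _ (hi₁.inter .univ)).1)
  · exact coe_mk_le _ (measure_ne_top _ _) ((key _ (hi₁.compl.inter .univ)).2)

end TV

section Analysis
open Real Nat



variable {p q : ℝ}

/-- telescoping sum of a unimodal sequence -/
lemma telescope_abs (g : ℕ → ℝ) (N k : ℕ) (hk : k ≤ N) (h0 : g 0 = 0) (hN : g N = 0)
    (hup : ∀ i < k, g i ≤ g (i+1)) (hdown : ∀ i, k ≤ i → g (i+1) ≤ g i) :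
    ∑ j ∈ Finset.range N, |g (j+1) - g j| = 2 * g k := by
  rw [Finset.range_eq_Ico, ← Finset.sum_Ico_consecutive _ (Nat.zero_le k) hk]
  have e1 : ∑ j ∈ Finset.Ico 0 k, |g (j+1) - g j| = g k - g 0 := by
    rw [← Finset.range_eq_Ico]
    rw [show (∑ j ∈ Finset.range k, |g (j+1) - g j|)
        = ∑ j ∈ Finset.range k, (g (j+1) - g j) from
      Finset.sum_congr rfl fun j hj => abs_of_nonneg
        (by linarith [hup j (Finset.mem_range.mp hj)])]
    exact Finset.sum_range_sub g k
  have e2 : ∑ j ∈ Finset.Ico k N, |g (j+1) - g j| = g k - g N := by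
    rw [Finset.sum_Ico_eq_sum_range]
    rw [show (∑ j ∈ Finset.range (N - k), |g (k + j + 1) - g (k + j)|)
        = ∑ j ∈ Finset.range (N - k), (g (k + j) - g (k + j + 1)) from
      Finset.sum_congr rfl fun j hj => by
        rw [abs_sub_comm]
        exact abs_of_nonneg (by linarith [hdown (k + j) (Nat.le_add_right k j)])]
    have := Finset.sum_range_sub' (fun i => g (k + i)) (N - k)
    simpa [Nat.add_sub_cancel' hk, add_assoc] using this
  rw [e1, e2, h0, hN]
  ring







lemma bcoef_nonneg (hp : 0 ≤ p) (hq : 0 ≤ q) (n j : ℕ) : 0 ≤ bcoef p q n j := by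
  unfold bcoef; positivity

lemma bcoef_pos (hp : 0 < p) (hq : 0 < q) {n j : ℕ} (h : j ≤ n) : 0 < bcoef p q n j := by
  unfold bcoef
  have := Nat.choose_pos h
  positivity

lemma bcoef_ratio {n j : ℕ} (hj : j < n) :
    bcoef p q n (j+1) * (((j:ℝ)+1) * p) = bcoef p q n j * (((n-j : ℕ) : ℝ) * q) := by
  unfold bcoef
  have hpow : p^(n-j) = p^(n-(j+1)) * p := by
    rw [← pow_succ]
    congr 1
    omega
  have hch : ((n.choose (j+1) * (j+1) : ℕ) : ℝ) = ((n.choose j * (n - j) : ℕ) : ℝ) := by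
    exact_mod_cast congrArg (Nat.cast (R := ℝ)) (Nat.choose_succ_right_eq n j)
  push_cast at hch
  rw [hpow, pow_succ]
  linear_combination (p^(n-(j+1)) * p * q^j * q) * hch

lemma exists_mode (hp : 0 < p) (hq : 0 < q) (hpq : p + q = 1) (n : ℕ) :
    ∃ m ≤ n, (∀ i < m, bcoef p q n i ≤ bcoef p q n (i+1))
      ∧ (∀ i, m ≤ i → bcoef p q n (i+1) ≤ bcoef p q n i)
      ∧ ((n:ℝ)*q - p ≤ m) ∧ ((m:ℝ) ≤ ((n:ℝ)+1)*q) := by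
  classical
  set Q : ℕ → Prop := fun j => ((n - j : ℕ) : ℝ) * q ≤ ((j:ℝ)+1) * p with hQ
  have hex : ∃ j, Q j := ⟨n, by simp [hQ]; positivity⟩
  set m := Nat.find hex with hm
  have hQm : Q m := Nat.find_spec hex
  have hmn : m ≤ n := Nat.find_min' hex (by simp [hQ]; positivity)
  have hnot : ∀ i < m, ¬ Q i := fun i hi => Nat.find_min hex hi
  have hQmono : ∀ i, Q i → Q (i+1) := by
    intro i hi
    simp only [hQ] at hi ⊢
    have h1 : ((n - (i+1) : ℕ) : ℝ) ≤ ((n - i : ℕ) : ℝ) := by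
      exact_mod_cast Nat.sub_le_sub_left (Nat.le_succ i) n
    push_cast
    nlinarith [mul_le_mul_of_nonneg_right h1 hq.le, hp, hi]
  have hQge : ∀ i, m ≤ i → Q i := by
    intro i hi
    induction i, hi using Nat.le_induction with
    | base => exact hQm
    | succ k hk ihk => exact hQmono k ihk
  refine ⟨m, hmn, ?_, ?_, ?_, ?_⟩
  · intro i hi
    have hiQ := hnot i hi
    rw [hQ] at hiQ
    push_neg at hiQ
    have hin : i < n := lt_of_lt_of_le hi hmn
    have hrat := bcoef_ratio (p := p) (q := q) hin
    have hpos : (0:ℝ) < ((i:ℝ)+1) * p := by positivity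
    have hb := bcoef_pos hp hq (le_of_lt hin)
    nlinarith [hrat, hiQ, hb, hpos]
  · intro i hi
    rcases Nat.lt_or_ge i n with hin | hin
    · have hiQ := hQge i hi
      rw [hQ] at hiQ
      have hrat := bcoef_ratio (p := p) (q := q) hin
      have hpos : (0:ℝ) < ((i:ℝ)+1) * p := by positivity
      have hb := bcoef_pos hp hq (le_of_lt hin)
      nlinarith [hrat, hiQ, hb, hpos]
    · have h0 : bcoef p q n (i+1) = 0 := by
        unfold bcoef
        rw [Nat.choose_eq_zero_of_lt (by omega)]
        simp
      rw [h0]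
      exact bcoef_nonneg hp.le hq.le n i
  · have := hQm
    rw [hQ] at this
    rw [Nat.cast_sub hmn] at this
    nlinarith [this]
  · rcases Nat.eq_zero_or_pos m with h0 | h0
    · rw [h0]; push_cast; positivity
    · have hne := hnot (m-1) (by omega)
      rw [hQ] at hne
      push_neg at hne
      have hc1 : ((n - (m-1) : ℕ) : ℝ) = (n:ℝ) - m + 1 := by
        have : n - (m-1) = n - m + 1 := by omega
        rw [this]
        push_cast [Nat.cast_sub hmn]
        ring
      have hc2 : (((m-1 : ℕ)):ℝ) = (m:ℝ) - 1 := by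
        have : ((m - 1 : ℕ) : ℝ) = (m:ℝ) - 1 := by
          push_cast [Nat.cast_sub h0]
          ring
        exact this
      rw [hc1, hc2] at hne
      nlinarith [hne]



lemma sqrt_pi_le_stirlingSeq {n : ℕ} (hn : 1 ≤ n) : Real.sqrt π ≤ Stirling.stirlingSeq n := by
  obtain ⟨k, rfl⟩ := Nat.exists_eq_add_of_le hn
  have ht : Tendsto (Stirling.stirlingSeq ∘ Nat.succ) atTop (𝓝 (Real.sqrt π)) :=
    Stirling.tendsto_stirlingSeq_sqrt_pi.comp (tendsto_add_atTop_nat 1)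
  have := Stirling.stirlingSeq'_antitone.le_of_tendsto ht k
  simpa [Nat.succ_eq_add_one, Nat.add_comm] using this

lemma stirling_pos_denom {n : ℕ} (hn : 1 ≤ n) :
    0 < Real.sqrt (2*(n:ℝ)) * ((n:ℝ) / Real.exp 1)^n := by
  have : (0:ℝ) < n := by exact_mod_cast hn
  positivity

lemma stirling_lower (n : ℕ) (hn : 1 ≤ n) :
    Real.sqrt π * (Real.sqrt (2*(n:ℝ)) * ((n:ℝ) / Real.exp 1)^n) ≤ (n ! : ℝ) := by
  have h1 := sqrt_pi_le_stirlingSeq hn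
  rw [Stirling.stirlingSeq, le_div_iff₀ (stirling_pos_denom hn)] at h1
  exact h1

lemma stirling_upper (n : ℕ) (hn : 1 ≤ n) :
    (n ! : ℝ) ≤ (Real.exp 1 / Real.sqrt 2) * (Real.sqrt (2*(n:ℝ)) * ((n:ℝ) / Real.exp 1)^n) := by
  obtain ⟨k, rfl⟩ := Nat.exists_eq_add_of_le hn
  have h1 : Stirling.stirlingSeq (1 + k) ≤ Stirling.stirlingSeq 1 := by
    have := Stirling.stirlingSeq'_antitone (Nat.zero_le k)
    simpa [Nat.succ_eq_add_one, Nat.add_comm] using this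
  rw [Stirling.stirlingSeq_one] at h1
  rw [Stirling.stirlingSeq, div_le_iff₀ (stirling_pos_denom hn)] at h1
  exact h1



lemma kl_le_one (hp : 0 < p) (hq : 0 < q) (hpq : p + q = 1) {j k : ℕ}
    (hj : 1 ≤ j) (hk : 1 ≤ k) :
    (((j:ℝ)+k)*q/j)^j * ((((j:ℝ)+k))*p/k)^k ≤ 1 := by
  have hjR : (0:ℝ) < j := by exact_mod_cast hj
  have hkR : (0:ℝ) < k := by exact_mod_cast hk
  have h1 : ((j:ℝ)+k)*q/j ≤ Real.exp (((j:ℝ)+k)*q/j - 1) := by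
    linarith [Real.add_one_le_exp (((j:ℝ)+k)*q/j - 1)]
  have h2 : ((j:ℝ)+k)*p/k ≤ Real.exp (((j:ℝ)+k)*p/k - 1) := by
    linarith [Real.add_one_le_exp (((j:ℝ)+k)*p/k - 1)]
  have hn1 : (0:ℝ) ≤ ((j:ℝ)+k)*q/j := by positivity
  have hn2 : (0:ℝ) ≤ ((j:ℝ)+k)*p/k := by positivity
  have h3 : (((j:ℝ)+k)*q/j)^j ≤ Real.exp (((j:ℝ)+k)*q - j) := by
    calc (((j:ℝ)+k)*q/j)^j ≤ (Real.exp (((j:ℝ)+k)*q/j - 1))^j :=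
          pow_le_pow_left₀ hn1 h1 j
      _ = Real.exp ((j:ℝ) * (((j:ℝ)+k)*q/j - 1)) := by rw [← Real.exp_nat_mul]
      _ = Real.exp (((j:ℝ)+k)*q - j) := by congr 1; field_simp
  have h4 : ((((j:ℝ)+k))*p/k)^k ≤ Real.exp (((j:ℝ)+k)*p - k) := by
    calc ((((j:ℝ)+k))*p/k)^k ≤ (Real.exp (((j:ℝ)+k)*p/k - 1))^k :=
          pow_le_pow_left₀ hn2 h2 k
      _ = Real.exp ((k:ℝ) * (((j:ℝ)+k)*p/k - 1)) := by rw [← Real.exp_nat_mul]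
      _ = Real.exp (((j:ℝ)+k)*p - k) := by congr 1; field_simp
  calc (((j:ℝ)+k)*q/j)^j * ((((j:ℝ)+k))*p/k)^k
      ≤ Real.exp (((j:ℝ)+k)*q - j) * Real.exp (((j:ℝ)+k)*p - k) := by
        apply mul_le_mul h3 h4 (by positivity) (Real.exp_nonneg _)
    _ = Real.exp ((((j:ℝ)+k)*q - j) + (((j:ℝ)+k)*p - k)) := (Real.exp_add _ _).symm
    _ = 1 := by rw [show (((j:ℝ)+k)*q - j) + (((j:ℝ)+k)*p - k) = ((j:ℝ)+k)*(p+q) - (j+k) by ring,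
          hpq]; simp

lemma bcoef_max_le (hp : 0 < p) (hq : 0 < q) (hpq : p + q = 1) {j k : ℕ}
    (hj : 1 ≤ j) (hk : 1 ≤ k) :
    bcoef p q (j+k) j ≤ ((Real.exp 1 / Real.sqrt 2) / π) * Real.sqrt (((j:ℝ)+k) / (2*j*k)) := by
  have hjR : (0:ℝ) < j := by exact_mod_cast hj
  have hkR : (0:ℝ) < k := by exact_mod_cast hk
  have hnR : (0:ℝ) < (j:ℝ)+k := by linarith
  have hπ : (0:ℝ) < π := Real.pi_pos
  have hb : bcoef p q (j+k) j = ((j+k).choose j : ℝ) * p^k * q^j := by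
    unfold bcoef; rw [Nat.add_sub_cancel_left]
  -- cast choose
  have hcast : (((j+k).choose j : ℕ) : ℝ) = ((j+k)! : ℝ) / ((j ! : ℝ) * (k ! : ℝ)) := by
    rw [Nat.cast_choose ℝ (Nat.le_add_right j k)]
    rw [Nat.add_sub_cancel_left]
  -- factorial bounds
  have hup := stirling_upper (j+k) (by omega)
  have hlo1 := stirling_lower j hj
  have hlo2 := stirling_lower k hk
  have hSj : 0 < Real.sqrt (2*(j:ℝ)) * ((j:ℝ) / Real.exp 1)^j := by positivity
  have hSk : 0 < Real.sqrt (2*(k:ℝ)) * ((k:ℝ) / Real.exp 1)^k := by positivity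
  have hπs : 0 < Real.sqrt π := Real.sqrt_pos.mpr hπ
  have hfj : (0:ℝ) < j ! := by exact_mod_cast Nat.factorial_pos j
  have hfk : (0:ℝ) < k ! := by exact_mod_cast Nat.factorial_pos k
  have hchoose_le : (((j+k).choose j : ℕ) : ℝ)
      ≤ ((Real.exp 1 / Real.sqrt 2) * (Real.sqrt (2*((j:ℝ)+k)) * (((j:ℝ)+k) / Real.exp 1)^(j+k)))
        / ((Real.sqrt π * (Real.sqrt (2*(j:ℝ)) * ((j:ℝ) / Real.exp 1)^j))
          * (Real.sqrt π * (Real.sqrt (2*(k:ℝ)) * ((k:ℝ) / Real.exp 1)^k))) := by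
    rw [hcast]
    have hnum : ((j+k)! : ℝ)
        ≤ (Real.exp 1 / Real.sqrt 2) * (Real.sqrt (2*((j:ℝ)+k)) * (((j:ℝ)+k) / Real.exp 1)^(j+k)) := by
      have := hup; push_cast at this ⊢; convert this using 4 <;> push_cast <;> ring
    have hden : (Real.sqrt π * (Real.sqrt (2*(j:ℝ)) * ((j:ℝ) / Real.exp 1)^j))
          * (Real.sqrt π * (Real.sqrt (2*(k:ℝ)) * ((k:ℝ) / Real.exp 1)^k))
        ≤ (j ! : ℝ) * (k ! : ℝ) :=
      mul_le_mul hlo1 hlo2 (by positivity) hfj.le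
    exact div_le_div₀ (by positivity) hnum (by positivity) hden
  -- abbreviations
  set S := Real.sqrt (2*((j:ℝ)+k)) with hS
  set Sj := Real.sqrt (2*(j:ℝ)) with hSj
  set Sk := Real.sqrt (2*(k:ℝ)) with hSk
  have hSpos : 0 < S := Real.sqrt_pos.mpr (by positivity)
  have hSjpos : 0 < Sj := Real.sqrt_pos.mpr (by positivity)
  have hSkpos : 0 < Sk := Real.sqrt_pos.mpr (by positivity)
  have hsqrt : S / (Sj * Sk) = Real.sqrt (((j:ℝ)+k) / (2*j*k)) := by
    rw [hS, hSj, hSk, ← Real.sqrt_mul (by positivity) (2*(k:ℝ)),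
      ← Real.sqrt_div (by positivity)]
    congr 1
    field_simp
  have hE : (0:ℝ) < Real.exp 1 := Real.exp_pos 1
  have hπsq : Real.sqrt π * Real.sqrt π = π := Real.mul_self_sqrt hπ.le
  have halg : ((Real.exp 1 / Real.sqrt 2) * (S * (((j:ℝ)+k) / Real.exp 1)^(j+k)))
        / ((Real.sqrt π * (Sj * ((j:ℝ) / Real.exp 1)^j))
          * (Real.sqrt π * (Sk * ((k:ℝ) / Real.exp 1)^k))) * (p^k * q^j)
      = ((Real.exp 1 / Real.sqrt 2) / π) * (S / (Sj * Sk))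
        * ((((j:ℝ)+k)*q/j)^j * ((((j:ℝ)+k))*p/k)^k) := by
    have e1 : ((((j:ℝ)+k))*q/(j:ℝ))^j = (((j:ℝ)+k)^j * q^j) / (j:ℝ)^j := by
      rw [div_pow, mul_pow]
    have e2 : ((((j:ℝ)+k))*p/(k:ℝ))^k = (((j:ℝ)+k)^k * p^k) / (k:ℝ)^k := by
      rw [div_pow, mul_pow]
    rw [e1, e2, div_pow, div_pow, div_pow, pow_add (Real.exp 1) j k, ← hπsq]
    have h2 : (0:ℝ) < Real.sqrt 2 := by positivity
    field_simp
    ring_nf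
    rw [Real.sq_sqrt hπ.le]
    simp [Real.sq_sqrt hπ.le]
  have hkl := kl_le_one hp hq hpq hj hk
  calc bcoef p q (j+k) j = (((j+k).choose j : ℕ) : ℝ) * (p^k * q^j) := by
        rw [hb]; ring
    _ ≤ (((Real.exp 1 / Real.sqrt 2) * (S * (((j:ℝ)+k) / Real.exp 1)^(j+k)))
        / ((Real.sqrt π * (Sj * ((j:ℝ) / Real.exp 1)^j))
          * (Real.sqrt π * (Sk * ((k:ℝ) / Real.exp 1)^k)))) * (p^k * q^j) := by
        apply mul_le_mul_of_nonneg_right _ (by positivity)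
        convert hchoose_le using 3 <;> push_cast <;> ring
    _ = ((Real.exp 1 / Real.sqrt 2) / π) * (S / (Sj * Sk))
        * ((((j:ℝ)+k)*q/j)^j * ((((j:ℝ)+k))*p/k)^k) := halg
    _ ≤ ((Real.exp 1 / Real.sqrt 2) / π) * (S / (Sj * Sk)) * 1 := by
        apply mul_le_mul_of_nonneg_left hkl (by positivity)
    _ = ((Real.exp 1 / Real.sqrt 2) / π) * Real.sqrt (((j:ℝ)+k) / (2*j*k)) := by
        rw [mul_one, hsqrt]

lemma sum_abs_tendsto_zero (hp : 0 < p) (hq : 0 < q) (hpq : p + q = 1) :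
    Tendsto (fun n => ∑ j ∈ Finset.range (n+2),
      |bcoef p q n j - bcoef p q (n+1) j|) atTop (𝓝 0) := by
  set C0 : ℝ := (Real.exp 1 / Real.sqrt 2) / π with hC0
  have hC0pos : 0 < C0 := by
    rw [hC0]
    have := Real.exp_pos 1
    have := Real.pi_pos
    positivity
  -- Step 1+2 : identify the sum
  have hmode := fun n => exists_mode hp hq hpq n
  choose mo hmon hup hdown hlow hupp using hmode
  have hsum : ∀ n, ∑ j ∈ Finset.range (n+2), |bcoef p q n j - bcoef p q (n+1) j|
      = 2 * q * bcoef p q n (mo n) := by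
    intro n
    set g : ℕ → ℝ := fun j => if j = 0 then 0 else bcoef p q n (j-1) with hg
    have habs : ∀ j ∈ Finset.range (n+2),
        |bcoef p q n j - bcoef p q (n+1) j| = q * |g (j+1) - g j| := by
      intro j hj
      have hjle : j ≤ n + 1 := by
        have := Finset.mem_range.mp hj; omega
      have hpas := bcoef_pascal p q n j hjle
      have hg1 : g (j+1) = bcoef p q n j := by simp [hg]
      have : bcoef p q n j - bcoef p q (n+1) j = q * (g (j+1) - g j) := by
        rw [hpas, hg1, hg]
        simp only []
        linear_combination (-(bcoef p q n j)) * hpq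
      rw [this, abs_mul, abs_of_nonneg hq.le]
    rw [Finset.sum_congr rfl habs, ← Finset.mul_sum]
    have htel : ∑ j ∈ Finset.range (n+2), |g (j+1) - g j| = 2 * g (mo n + 1) := by
      apply telescope_abs g (n+2) (mo n + 1) (by have := hmon n; omega) (by simp [hg])
      · have h0 : bcoef p q n (n+1) = 0 := by
          unfold bcoef
          rw [Nat.choose_eq_zero_of_lt (by omega)]
          simp
        simp [hg, h0]
      · intro i hi
        rcases i with _ | i'
        · simp [hg]
          exact bcoef_nonneg hp.le hq.le n 0
        · simp only [hg, if_neg (Nat.succ_ne_zero i'), Nat.add_sub_cancel]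
          have : i' < mo n := by omega
          simpa using hup n i' this
      · intro i hi
        rcases i with _ | i'
        · omega
        · simp only [hg, if_neg (Nat.succ_ne_zero i'), Nat.add_sub_cancel]
          have : mo n ≤ i' := by omega
          simpa using hdown n i' this
    rw [htel]
    have : g (mo n + 1) = bcoef p q n (mo n) := by simp [hg]
    rw [this]
    ring
  -- Step 3 : eventual bound
  have hev : ∀ᶠ n : ℕ in atTop, 2 * q * bcoef p q n (mo n)
      ≤ 2 * q * (C0 * Real.sqrt (2/(p*q)/n)) := by
    have h1 : ∀ᶠ n : ℕ in atTop, 2*(1+p)/q ≤ (n:ℝ) :=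
      tendsto_natCast_atTop_atTop.eventually_ge_atTop _
    have h2 : ∀ᶠ n : ℕ in atTop, 2*(1+q)/p ≤ (n:ℝ) :=
      tendsto_natCast_atTop_atTop.eventually_ge_atTop _
    filter_upwards [h1, h2] with n hn1 hn2
    have hnpos : (0:ℝ) < n := by
      have : (0:ℝ) < 2*(1+p)/q := by positivity
      linarith
    have hnq : 2*(1+p) ≤ (n:ℝ)*q := by
      rw [div_le_iff₀ hq] at hn1; linarith
    have hnp : 2*(1+q) ≤ (n:ℝ)*p := by
      rw [div_le_iff₀ hp] at hn2; linarith
    -- mode bounds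
    have hm1 : (1:ℝ) ≤ mo n := by
      have := hlow n; nlinarith
    have hmhalf : (n:ℝ)*q/2 ≤ mo n := by
      have := hlow n; nlinarith
    have hmnat1 : 1 ≤ mo n := by exact_mod_cast hm1
    have hkhalf : (n:ℝ)*p/2 ≤ (n:ℝ) - mo n := by
      have := hupp n; nlinarith
    have hk1 : (1:ℝ) ≤ (n:ℝ) - mo n := by nlinarith
    have hmn : mo n ≤ n := hmon n
    set k := n - mo n with hkdef
    have hkcast : (k:ℝ) = (n:ℝ) - mo n := by
      rw [hkdef]; push_cast [Nat.cast_sub hmn]; ring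
    have hknat1 : 1 ≤ k := by
      have : (1:ℝ) ≤ (k:ℝ) := by rw [hkcast]; exact hk1
      exact_mod_cast this
    have hjk : mo n + k = n := by omega
    have hb := bcoef_max_le hp hq hpq hmnat1 hknat1
    rw [hjk] at hb
    have hcast2 : ((mo n : ℝ) + k) = (n:ℝ) := by rw [hkcast]; ring
    rw [hcast2] at hb
    have hsqle : Real.sqrt ((n:ℝ) / (2*(mo n)*k)) ≤ Real.sqrt (2/(p*q)/(n:ℝ)) := by
      apply Real.sqrt_le_sqrt
      rw [div_div]
      rw [div_le_div_iff₀ (by positivity) (by positivity)]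
      have hprod : (n:ℝ)*q/2 * ((n:ℝ)*p/2) ≤ (mo n : ℝ) * k := by
        apply mul_le_mul hmhalf (by rw [hkcast]; exact hkhalf) (by positivity)
          (by positivity)
      nlinarith [hprod]
    calc 2 * q * bcoef p q n (mo n) ≤ 2 * q * (C0 * Real.sqrt ((n:ℝ) / (2*(mo n)*k))) := by
          apply mul_le_mul_of_nonneg_left _ (by positivity)
          rw [hC0]
          exact hb
      _ ≤ 2 * q * (C0 * Real.sqrt (2/(p*q)/(n:ℝ))) := by
          apply mul_le_mul_of_nonneg_left _ (by positivity)
          exact mul_le_mul_of_nonneg_left hsqle hC0pos.le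
  -- Step 4 : the bound tends to zero
  have hB : Tendsto (fun n : ℕ => 2 * q * (C0 * Real.sqrt (2/(p*q)/n))) atTop (𝓝 0) := by
    have h1 : Tendsto (fun n : ℕ => 2/(p*q)/(n:ℝ)) atTop (𝓝 0) :=
      tendsto_const_div_atTop_nhds_zero_nat _
    have h2 : Tendsto (fun n : ℕ => Real.sqrt (2/(p*q)/(n:ℝ))) atTop (𝓝 0) := by
      have := h1.sqrt
      simpa using this
    have := (h2.const_mul C0).const_mul (2*q)
    simpa [mul_assoc] using this
  -- Step 5 : squeeze
  apply squeeze_zero' (g := fun n : ℕ => 2 * q * (C0 * Real.sqrt (2/(p*q)/n)))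
  · filter_upwards with n
    exact Finset.sum_nonneg fun j _ => abs_nonneg _
  · filter_upwards [hev] with n hn
    rw [hsum n]
    exact hn
  · exact hB

end Analysis

lemma nnreal_min_add_sub (a b : ℝ≥0) : min a b + (a - b) = a := by
  rcases le_total a b with h | h
  · rw [min_eq_left h, tsub_eq_zero_of_le h, add_zero]
  · rw [min_eq_right h]
    exact add_tsub_cancel_of_le h

lemma nnreal_abs_coe (a b : ℝ≥0) : (((a - b) + (b - a) : ℝ≥0) : ℝ) = |(a:ℝ) - (b:ℝ)| := by
  rcases le_total a b with h | h
  · rw [tsub_eq_zero_of_le h, zero_add, NNReal.coe_sub h, abs_sub_comm,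
      abs_of_nonneg (by simp [h] : (0:ℝ) ≤ (b:ℝ) - a)]
  · rw [tsub_eq_zero_of_le h, add_zero, NNReal.coe_sub h,
      abs_of_nonneg (by simp [h] : (0:ℝ) ≤ (a:ℝ) - b)]

lemma bcoef_coe (pn qn : ℝ≥0) (n j : ℕ) :
    ((bcoef pn qn n j : ℝ≥0) : ℝ) = bcoef (pn:ℝ) (qn:ℝ) n j := by
  unfold bcoef
  push_cast
  ring

section MainAux

variable {H : Type*} [Group H] [MeasurableSpace H] [MeasurableMul₂ H]

lemma isFiniteMeasure_sum_smul {ι : Type*} (t : Finset ι) (c : ι → ℝ≥0)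
    (f : ι → Measure H) [∀ i, IsFiniteMeasure (f i)] :
    IsFiniteMeasure (∑ i ∈ t, (c i : ℝ≥0∞) • f i) := by
  constructor
  rw [Measure.finset_sum_apply]
  refine ENNReal.sum_lt_top.mpr fun i _ => ?_
  rw [Measure.smul_apply, smul_eq_mul]
  exact ENNReal.mul_lt_top ENNReal.coe_lt_top (measure_lt_top _ _)

lemma toSM_congr {μ ν : Measure H} [IsFiniteMeasure μ] [IsFiniteMeasure ν] (h : μ = ν) :
    μ.toSignedMeasure = ν.toSignedMeasure := by
  subst h
  rfl

lemma sum_smul_apply_univ (c : ℕ → ℝ≥0) (ν : Measure H) [IsProbabilityMeasure ν] (N : ℕ) :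
    (∑ j ∈ Finset.range N, ((c j : ℝ≥0∞) • convPow ν j)) Set.univ
      = ∑ j ∈ Finset.range N, ((c j : ℝ≥0∞)) := by
  rw [Measure.finset_sum_apply]
  refine Finset.sum_congr rfl fun j _ => ?_
  rw [Measure.smul_apply, measure_univ, smul_eq_mul, mul_one]

end MainAux

end StmtAux

open StmtAux

/-- If `H` is a measurable group and `μ` a probability measure on `H` with `μ({e}) > 0`, then
the total variation norm `‖μ^n − μ^{n+1}‖` tends to `0` as `n → ∞`. -/
theorem stmt1 {H : Type*} [Group H] [MeasurableSpace H] [MeasurableMul₂ H]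
    (μ : Measure H) [IsProbabilityMeasure μ]
    (he : 0 < μ {1}) :
    Tendsto
      (fun n => ((convPow μ n).toSignedMeasure
          - (convPow μ (n + 1)).toSignedMeasure).totalVariation Set.univ)
      atTop (𝓝 0) := by
  rcases lt_or_ge (μ {1}) 1 with hlt | hge
  swap
  · -- degenerate case : μ is the Dirac mass at 1
    have h1 : μ {1} = 1 :=
      le_antisymm ((measure_mono (Set.subset_univ _)).trans_eq measure_univ) hge
    have hμd : μ = Measure.dirac 1 := by
      ext s hs
      rw [Measure.dirac_apply' _ hs]
      by_cases hmem : (1:H) ∈ s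
      · rw [Set.indicator_of_mem hmem, Pi.one_apply]
        refine le_antisymm ((measure_mono (Set.subset_univ _)).trans_eq measure_univ) ?_
        rw [← h1]
        exact measure_mono (Set.singleton_subset_iff.mpr hmem)
      · rw [Set.indicator_of_notMem hmem]
        have hcompl : (1:ℝ≥0∞) ≤ μ sᶜ := by
          rw [← h1]
          exact measure_mono (Set.singleton_subset_iff.mpr hmem)
        have hadd : μ s + μ sᶜ = 1 := by
          rw [measure_add_measure_compl hs, measure_univ]
        have : μ s + 1 ≤ μ s + μ sᶜ := by gcongr
        rw [hadd] at this
        have h0 : μ s + 1 ≤ 0 + 1 := by simpa using this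
        exact le_antisymm (by exact_mod_cast (ENNReal.add_le_add_iff_right ENNReal.one_ne_top).mp h0) zero_le
    have hcp : ∀ n, convPow μ n = Measure.dirac 1 := by
      intro n
      induction n with
      | zero => rw [convPow]
      | succ n ih =>
        show (convPow μ n).mconv μ = _
        rw [ih, hμd, Measure.mconv_dirac_one]
    have hfun : (fun n => ((convPow μ n).toSignedMeasure
          - (convPow μ (n + 1)).toSignedMeasure).totalVariation Set.univ)
        = fun _ => 0 := by
      funext n
      rw [toSM_congr (hcp n), toSM_congr (hcp (n+1)), sub_self,
        SignedMeasure.totalVariation_zero]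
      rfl
    rw [hfun]
    exact tendsto_const_nhds
  · obtain ⟨ν, pn, qn, hνprob, hpn, hqn, hpqn, hμeq⟩ := exists_decomp μ he hlt
    haveI := hνprob
    have hA0 : ∀ n : ℕ, bcoef pn qn n (n+1) = (0:ℝ≥0) := by
      intro n
      unfold bcoef
      rw [Nat.choose_succ_self]
      simp
    have hconv2 : ∀ n, convPow μ n
        = ∑ j ∈ Finset.range (n+2), ((bcoef pn qn n j : ℝ≥0) : ℝ≥0∞) • convPow ν j := by
      intro n
      rw [convPow_eq_sum ν pn qn hμeq n]
      conv_rhs => rw [Finset.sum_range_succ]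
      rw [hA0 n]
      simp
    set D : ℕ → ℝ≥0 := fun n => ∑ j ∈ Finset.range (n+2),
      ((bcoef pn qn n j - bcoef pn qn (n+1) j) + (bcoef pn qn (n+1) j - bcoef pn qn n j))
      with hD
    have hTV : ∀ n, ((convPow μ n).toSignedMeasure
        - (convPow μ (n+1)).toSignedMeasure).totalVariation Set.univ ≤ ((D n : ℝ≥0) : ℝ≥0∞) := by
      intro n
      set γ := ∑ j ∈ Finset.range (n+2),
        ((min (bcoef pn qn n j) (bcoef pn qn (n+1) j) : ℝ≥0) : ℝ≥0∞) • convPow ν j with hγ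
      set α := ∑ j ∈ Finset.range (n+2),
        ((bcoef pn qn n j - bcoef pn qn (n+1) j : ℝ≥0) : ℝ≥0∞) • convPow ν j with hα
      set β := ∑ j ∈ Finset.range (n+2),
        ((bcoef pn qn (n+1) j - bcoef pn qn n j : ℝ≥0) : ℝ≥0∞) • convPow ν j with hβ
      haveI : IsFiniteMeasure γ := by rw [hγ]; exact isFiniteMeasure_sum_smul _ _ _
      haveI : IsFiniteMeasure α := by rw [hα]; exact isFiniteMeasure_sum_smul _ _ _
      haveI : IsFiniteMeasure β := by rw [hβ]; exact isFiniteMeasure_sum_smul _ _ _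
      have hμn : convPow μ n = γ + α := by
        rw [hconv2 n, hγ, hα, ← Finset.sum_add_distrib]
        refine Finset.sum_congr rfl fun j _ => ?_
        rw [← add_smul, ← ENNReal.coe_add, nnreal_min_add_sub]
      have hμn1 : convPow μ (n+1) = γ + β := by
        rw [convPow_eq_sum ν pn qn hμeq (n+1), hγ, hβ, ← Finset.sum_add_distrib]
        refine Finset.sum_congr rfl fun j _ => ?_
        rw [← add_smul, ← ENNReal.coe_add, min_comm, nnreal_min_add_sub]
      have e1 : (convPow μ n).toSignedMeasure = γ.toSignedMeasure + α.toSignedMeasure := by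
        rw [toSM_congr hμn, Measure.toSignedMeasure_add]
      have e2 : (convPow μ (n+1)).toSignedMeasure = γ.toSignedMeasure + β.toSignedMeasure := by
        rw [toSM_congr hμn1, Measure.toSignedMeasure_add]
      have e3 : (convPow μ n).toSignedMeasure - (convPow μ (n+1)).toSignedMeasure
          = α.toSignedMeasure - β.toSignedMeasure := by
        rw [e1, e2]
        abel
      rw [e3]
      calc (α.toSignedMeasure - β.toSignedMeasure).totalVariation Set.univ
          ≤ α Set.univ + β Set.univ := tv_sub_le α β
        _ = ((D n : ℝ≥0) : ℝ≥0∞) := by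
            rw [hα, hβ, sum_smul_apply_univ, sum_smul_apply_univ, hD]
            push_cast
            rw [Finset.sum_add_distrib]
    -- real convergence
    have hp : (0:ℝ) < pn := by exact_mod_cast hpn
    have hq : (0:ℝ) < qn := by exact_mod_cast hqn
    have hpq : (pn:ℝ) + qn = 1 := by exact_mod_cast congrArg NNReal.toReal hpqn
    have hDcast : ∀ n, ((D n : ℝ≥0) : ℝ)
        = ∑ j ∈ Finset.range (n+2), |bcoef (pn:ℝ) (qn:ℝ) n j - bcoef (pn:ℝ) (qn:ℝ) (n+1) j| := by
      intro n
      rw [hD, NNReal.coe_sum]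
      refine Finset.sum_congr rfl fun j _ => ?_
      rw [nnreal_abs_coe, bcoef_coe, bcoef_coe]
    have hD0 : Tendsto (fun n => ((D n : ℝ≥0) : ℝ)) atTop (𝓝 0) := by
      have := sum_abs_tendsto_zero hp hq hpq
      rw [show (fun n => ((D n : ℝ≥0) : ℝ)) = fun n => ∑ j ∈ Finset.range (n+2),
        |bcoef (pn:ℝ) (qn:ℝ) n j - bcoef (pn:ℝ) (qn:ℝ) (n+1) j| from funext hDcast]
      exact this
    have hD0' : Tendsto D atTop (𝓝 0) := by
      rw [← NNReal.tendsto_coe]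
      simpa using hD0
    have hDE : Tendsto (fun n => ((D n : ℝ≥0) : ℝ≥0∞)) atTop (𝓝 0) := by
      rw [← ENNReal.coe_zero]
      exact ENNReal.tendsto_coe.mpr hD0'
    exact tendsto_of_tendsto_of_tendsto_of_le_of_le tendsto_const_nhds hDE
      (fun n => zero_le) hTV
end

section
/- Let H be a measurable group, let 0 < α ≤ 1, let μ₀ be a probability measure on H, and set μ = α·δ_e + (1−α)·μ₀. Then for every n ≥ 0, the total variation norm satisfies ‖μ^n − μ^{n+1}‖ ≤ Σ_{i=0}^{n+1} |C(n,i) α^{n−i} (1−α)^i − C(n+1,i) α^{n+1−i} (1−α)^i|, with the convention C(n,i) = 0 for i > n. -/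
open MeasureTheory

open scoped ENNReal

section AuxConv

variable {H : Type*} [Group H] [MeasurableSpace H] [MeasurableMul₂ H]

lemma mySmul_mconv (c : ℝ≥0∞) (μ ν : Measure H) [SFinite ν] :
    (c • μ).mconv ν = c • (μ.mconv ν) := by
  unfold Measure.mconv
  ext s hs
  rw [Measure.map_apply measurable_mul hs, Measure.smul_apply,
    Measure.map_apply measurable_mul hs,
    Measure.prod_apply (measurable_mul hs), Measure.prod_apply (measurable_mul hs),
    lintegral_smul_measure, smul_eq_mul]

lemma myMconv_smul (c : ℝ≥0∞) (μ ν : Measure H) [SFinite μ] [SFinite ν] :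
    μ.mconv (c • ν) = c • (μ.mconv ν) := by
  unfold Measure.mconv
  ext s hs
  rw [Measure.map_apply measurable_mul hs, Measure.smul_apply,
    Measure.map_apply measurable_mul hs,
    Measure.prod_apply (measurable_mul hs), Measure.prod_apply (measurable_mul hs)]
  simp_rw [Measure.smul_apply, smul_eq_mul]
  rw [lintegral_const_mul _ (measurable_measure_prodMk_left (measurable_mul hs))]

lemma mySum_mconv {ι : Type*} (t : Finset ι) (m : ι → Measure H) (ν : Measure H) [SFinite ν] :
    (∑ i ∈ t, m i).mconv ν = ∑ i ∈ t, (m i).mconv ν := by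
  unfold Measure.mconv
  ext s hs
  rw [Measure.map_apply measurable_mul hs, Measure.prod_apply (measurable_mul hs),
    lintegral_finset_sum_measure, Measure.finset_sum_apply]
  refine Finset.sum_congr rfl fun i _ => ?_
  rw [Measure.map_apply measurable_mul hs, Measure.prod_apply (measurable_mul hs)]

end AuxConv

lemma myTV_le {H : Type*} [MeasurableSpace H] (P N : Measure H)
    [IsFiniteMeasure P] [IsFiniteMeasure N] :
    (P.toSignedMeasure - N.toSignedMeasure).totalVariation Set.univ
      ≤ P Set.univ + N Set.univ := by
  set s := P.toSignedMeasure - N.toSignedMeasure with hs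
  obtain ⟨i, hi₁, hi₂, hi₃, hpos, hneg⟩ := s.toJordanDecomposition_spec
  rw [SignedMeasure.totalVariation, Measure.add_apply, hpos, hneg,
    SignedMeasure.toMeasureOfZeroLE_apply _ hi₂ hi₁ MeasurableSet.univ,
    SignedMeasure.toMeasureOfLEZero_apply _ hi₃ hi₁.compl MeasurableSet.univ]
  have hsapp : ∀ (A : Set H), MeasurableSet A → s A = (P A).toReal - (N A).toReal := by
    intro A hA
    rw [hs, VectorMeasure.sub_apply, Measure.toSignedMeasure_apply_measurable hA,
      Measure.toSignedMeasure_apply_measurable hA]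
    rfl
  have h1 : s (i ∩ Set.univ) ≤ (P Set.univ).toReal := by
    rw [hsapp _ (hi₁.inter MeasurableSet.univ)]
    have := ENNReal.toReal_mono (measure_ne_top P Set.univ)
      (measure_mono (Set.subset_univ (i ∩ Set.univ)) : P (i ∩ Set.univ) ≤ P Set.univ)
    have h0 : (0:ℝ) ≤ (N (i ∩ Set.univ)).toReal := ENNReal.toReal_nonneg
    linarith
  have h2 : -s (iᶜ ∩ Set.univ) ≤ (N Set.univ).toReal := by
    rw [hsapp _ (hi₁.compl.inter MeasurableSet.univ)]
    have := ENNReal.toReal_mono (measure_ne_top N Set.univ)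
      (measure_mono (Set.subset_univ (iᶜ ∩ Set.univ)) : N (iᶜ ∩ Set.univ) ≤ N Set.univ)
    have h0 : (0:ℝ) ≤ (P (iᶜ ∩ Set.univ)).toReal := ENNReal.toReal_nonneg
    linarith
  rw [← ENNReal.ofReal_eq_coe_nnreal, ← ENNReal.ofReal_eq_coe_nnreal]
  refine add_le_add ?_ ?_
  · rw [← ENNReal.ofReal_toReal (measure_ne_top P Set.univ)]
    exact ENNReal.ofReal_le_ofReal h1
  · rw [← ENNReal.ofReal_toReal (measure_ne_top N Set.univ)]
    exact ENNReal.ofReal_le_ofReal h2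

lemma myPascal (α : ℝ) (n i : ℕ) (hi : i ≤ n) :
    α * ((n.choose (i+1) : ℝ) * α ^ (n - (i+1)) * (1-α) ^ (i+1))
      + (1-α) * ((n.choose i : ℝ) * α ^ (n - i) * (1-α) ^ i)
    = ((n+1).choose (i+1) : ℝ) * α ^ (n + 1 - (i+1)) * (1-α) ^ (i+1) := by
  rcases Nat.lt_or_ge i n with h | h
  · obtain ⟨k, hk⟩ : ∃ k, n - i = k + 1 := ⟨n - i - 1, by omega⟩
    have e1 : n - (i + 1) = k := by omega
    have e2 : n + 1 - (i + 1) = k + 1 := by omega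
    rw [e1, e2, hk, Nat.choose_succ_succ]
    push_cast
    ring
  · have hin : i = n := le_antisymm hi h
    subst hin
    have e1 : i - (i + 1) = 0 := by omega
    have e2 : i + 1 - (i + 1) = 0 := by omega
    have e3 : i - i = 0 := by omega
    rw [e1, e2, e3, Nat.choose_succ_self, Nat.choose_self, Nat.choose_self]
    push_cast
    ring

lemma convPow_eq {H : Type*} [Group H] [MeasurableSpace H] [MeasurableMul₂ H]
    (α : ℝ) (hα0 : 0 ≤ α) (hα1 : α ≤ 1)
    (μ₀ : Measure H) [IsProbabilityMeasure μ₀]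
    (μ : Measure H)
    (hμ : μ = ENNReal.ofReal α • Measure.dirac (1 : H) + ENNReal.ofReal (1 - α) • μ₀) :
    ∀ n, convPow μ n = ∑ i ∈ Finset.range (n+1),
      ENNReal.ofReal ((n.choose i : ℝ) * α ^ (n - i) * (1-α) ^ i) • convPow μ₀ i := by
  have h1α : 0 ≤ 1 - α := by linarith
  intro n
  induction n with
  | zero => simp [convPow]
  | succ n IH =>
      set ν : ℕ → Measure H := convPow μ₀ with hν
      set c : ℕ → ℕ → ℝ≥0∞ := fun m i =>
        ENNReal.ofReal ((m.choose i : ℝ) * α ^ (m - i) * (1-α) ^ i) with hc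
      have hνp : ∀ i, IsProbabilityMeasure (ν i) := fun i => convPow.isProbabilityMeasure μ₀ i
      have hsf : ∀ i, SFinite (ν i) := fun i => by have := hνp i; infer_instance
      -- the one-step formula
      have step : ∀ i, (ν i).mconv μ
          = ENNReal.ofReal α • ν i + ENNReal.ofReal (1-α) • ν (i+1) := by
        intro i
        have := hνp i
        rw [hμ, Measure.mconv_add, myMconv_smul, myMconv_smul, Measure.mconv_dirac_one]
        rfl
      have hμsf : SFinite μ := by rw [hμ]; infer_instance
      calc convPow μ (n+1) = (∑ i ∈ Finset.range (n+1), c n i • ν i).mconv μ := by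
            rw [convPow, IH]
        _ = ∑ i ∈ Finset.range (n+1), (c n i • ν i).mconv μ := mySum_mconv _ _ _
        _ = ∑ i ∈ Finset.range (n+1),
              ((c n i * ENNReal.ofReal α) • ν i + (c n i * ENNReal.ofReal (1-α)) • ν (i+1)) := by
            refine Finset.sum_congr rfl fun i _ => ?_
            have := hνp i
            rw [mySmul_mconv, step i, smul_add, smul_smul, smul_smul]
        _ = ∑ i ∈ Finset.range (n+1), (c n i * ENNReal.ofReal α) • ν i
              + ∑ i ∈ Finset.range (n+1), (c n i * ENNReal.ofReal (1-α)) • ν (i+1) :=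
            Finset.sum_add_distrib
        _ = ∑ i ∈ Finset.range (n+2), c (n+1) i • ν i := by
            have hext : ∑ i ∈ Finset.range (n+2), (c n i * ENNReal.ofReal α) • ν i
                = ∑ i ∈ Finset.range (n+1), (c n i * ENNReal.ofReal α) • ν i := by
              rw [Finset.sum_range_succ]
              have : c n (n+1) = 0 := by
                simp [hc, Nat.choose_succ_self]
              rw [this, zero_mul, zero_smul, add_zero]
            rw [← hext, Finset.sum_range_succ' (fun i => (c n i * ENNReal.ofReal α) • ν i) (n+1),
              Finset.sum_range_succ' (fun i => c (n+1) i • ν i) (n+1)]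
            have h0 : (c n 0 * ENNReal.ofReal α) • ν 0 = c (n+1) 0 • ν 0 := by
              congr 1
              rw [hc]
              simp only [Nat.choose_zero_right, Nat.cast_one, Nat.sub_zero, pow_zero,
                one_mul, mul_one]
              rw [← ENNReal.ofReal_mul (by positivity), ← pow_succ]
            rw [h0, add_assoc, add_comm (c (n+1) 0 • ν 0)
              (∑ i ∈ Finset.range (n+1), (c n i * ENNReal.ofReal (1-α)) • ν (i+1)), ← add_assoc,
              ← Finset.sum_add_distrib]
            congr 1
            refine Finset.sum_congr rfl fun i hi => ?_
            rw [← add_smul]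
            congr 1
            have hin : i ≤ n := by
              have := Finset.mem_range.mp hi; omega
            rw [hc]
            simp only
            rw [mul_comm _ (ENNReal.ofReal α), mul_comm _ (ENNReal.ofReal (1-α)),
              ← ENNReal.ofReal_mul hα0, ← ENNReal.ofReal_mul h1α,
              ← ENNReal.ofReal_add (by positivity) (by positivity),
              myPascal α n i hin]

/-- If `μ = α·δ_e + (1−α)·μ₀` with `0 < α ≤ 1` and `μ₀` a probability measure, then
`‖μ^n − μ^{n+1}‖ ≤ Σ_{i=0}^{n+1} |C(n,i) α^{n−i} (1−α)^i − C(n+1,i) α^{n+1−i} (1−α)^i|`,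
with the convention `C(n,i) = 0` for `i > n`. -/
theorem stmt3 {H : Type*} [Group H] [MeasurableSpace H] [MeasurableMul₂ H]
    (α : ℝ) (hα : 0 < α) (hα1 : α ≤ 1)
    (μ₀ : Measure H) [IsProbabilityMeasure μ₀]
    (μ : Measure H)
    (hμ : μ = ENNReal.ofReal α • Measure.dirac (1 : H) + ENNReal.ofReal (1 - α) • μ₀)
    (hprob : IsProbabilityMeasure μ)
    (n : ℕ) :
    ((convPow μ n).toSignedMeasure
        - (convPow μ (n + 1)).toSignedMeasure).totalVariation Set.univ
      ≤ ENNReal.ofReal (∑ i ∈ Finset.range (n + 2),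
          |(n.choose i : ℝ) * α ^ (n - i) * (1 - α) ^ i
            - ((n + 1).choose i : ℝ) * α ^ (n + 1 - i) * (1 - α) ^ i|) := by
  have hα0 : 0 ≤ α := le_of_lt hα
  have h1α : 0 ≤ 1 - α := by linarith
  set ν : ℕ → Measure H := convPow μ₀ with hν
  have hνp : ∀ i, IsProbabilityMeasure (ν i) := fun i => convPow.isProbabilityMeasure μ₀ i
  set a : ℕ → ℕ → ℝ := fun m i => (m.choose i : ℝ) * α ^ (m - i) * (1-α) ^ i with ha
  have ha0 : ∀ m i, 0 ≤ a m i := fun m i => by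
    rw [ha]; positivity
  -- structure formulas, both over `range (n+2)`
  have hstrn : convPow μ n = ∑ i ∈ Finset.range (n+2), ENNReal.ofReal (a n i) • ν i := by
    rw [convPow_eq α hα0 hα1 μ₀ μ hμ n]
    symm
    rw [Finset.sum_range_succ, show a n (n+1) = 0 from by simp [ha, Nat.choose_succ_self],
      ENNReal.ofReal_zero, zero_smul, add_zero]
  have hstrn1 : convPow μ (n+1) = ∑ i ∈ Finset.range (n+2), ENNReal.ofReal (a (n+1) i) • ν i :=
    convPow_eq α hα0 hα1 μ₀ μ hμ (n+1)
  set P : Measure H := ∑ i ∈ Finset.range (n+2),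
    ENNReal.ofReal (max (a n i - a (n+1) i) 0) • ν i with hP
  set N : Measure H := ∑ i ∈ Finset.range (n+2),
    ENNReal.ofReal (max (a (n+1) i - a n i) 0) • ν i with hN
  have hfin : ∀ (f : ℕ → ℝ), IsFiniteMeasure (∑ i ∈ Finset.range (n+2),
      ENNReal.ofReal (f i) • ν i) := by
    intro f
    constructor
    rw [Measure.finset_sum_apply]
    refine ENNReal.sum_lt_top.mpr fun i _ => ?_
    have := hνp i
    rw [Measure.smul_apply, measure_univ, smul_eq_mul, mul_one]
    exact ENNReal.ofReal_lt_top
  have hPf : IsFiniteMeasure P := hfin _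
  have hNf : IsFiniteMeasure N := hfin _
  -- measure identity
  have key : convPow μ n + N = convPow μ (n+1) + P := by
    rw [hstrn, hstrn1, hN, hP, ← Finset.sum_add_distrib, ← Finset.sum_add_distrib]
    refine Finset.sum_congr rfl fun i _ => ?_
    rw [← add_smul, ← add_smul, ← ENNReal.ofReal_add (ha0 n i) (le_max_right _ _),
      ← ENNReal.ofReal_add (ha0 (n+1) i) (le_max_right _ _)]
    congr 2
    rcases le_total (a n i) (a (n+1) i) with h | h
    · rw [max_eq_left (by linarith), max_eq_right (by linarith)]; ring
    · rw [max_eq_right (by linarith), max_eq_left (by linarith)]; ring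
  -- signed measure identity
  have hsg : (convPow μ n).toSignedMeasure - (convPow μ (n+1)).toSignedMeasure
      = P.toSignedMeasure - N.toSignedMeasure := by
    have h := Measure.toSignedMeasure_congr key
    rw [Measure.toSignedMeasure_add, Measure.toSignedMeasure_add] at h
    rw [sub_eq_sub_iff_add_eq_add, h, add_comm]
  rw [hsg]
  refine le_trans (myTV_le P N) ?_
  have happ : ∀ (f : ℕ → ℝ), (∑ i ∈ Finset.range (n+2),
      ENNReal.ofReal (f i) • ν i) Set.univ = ∑ i ∈ Finset.range (n+2), ENNReal.ofReal (f i) := by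
    intro f
    rw [Measure.finset_sum_apply]
    refine Finset.sum_congr rfl fun i _ => ?_
    have := hνp i
    rw [Measure.smul_apply, measure_univ, smul_eq_mul, mul_one]
  rw [hP, hN, happ, happ, ← Finset.sum_add_distrib,
    ENNReal.ofReal_sum_of_nonneg (fun i _ => abs_nonneg _)]
  refine Finset.sum_le_sum fun i _ => le_of_eq ?_
  rw [← ENNReal.ofReal_add (le_max_right _ _) (le_max_right _ _)]
  congr 1
  show max (a n i - a (n+1) i) 0 + max (a (n+1) i - a n i) 0 = |a n i - a (n+1) i|
  rcases le_total (a n i) (a (n+1) i) with h | h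
  · rw [max_eq_right (by linarith), max_eq_left (by linarith), abs_of_nonpos (by linarith)]; ring
  · rw [max_eq_left (by linarith), max_eq_right (by linarith), abs_of_nonneg (by linarith)]; ring
end

section
/- Let 0 < p < 1 and set q = 1 − p. Then Σ_{i=0}^{n+1} |C(n,i) p^i q^{n−i} − C(n+1,i) p^i q^{n+1−i}| tends to 0 as n → ∞ (with the convention C(n,i) = 0 for i > n). Equivalently, the total variation distance between the binomial distributions with parameters (n,p) and (n+1,p) tends to 0 as n → ∞. -/
open Filter Topology Finset

lemma sumB (p q : ℝ) (h : p + q = 1) (m : ℕ) :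
    ∑ i ∈ range (m+1), (m.choose i : ℝ) * p^i * q^(m-i) = 1 := by
  have h2 := add_pow p q m
  rw [h, one_pow] at h2
  rw [h2]
  exact Finset.sum_congr rfl fun i _ => by ring

lemma sum_iB (p q : ℝ) (h : p + q = 1) (m : ℕ) :
    ∑ i ∈ range (m+1), (i:ℝ) * ((m.choose i : ℝ) * p^i * q^(m-i)) = m * p := by
  cases m with
  | zero => simp
  | succ k =>
    rw [Finset.sum_range_succ']
    have step : ∀ j ∈ range (k+1), ((j+1 : ℕ):ℝ) * (((k+1).choose (j+1) : ℝ) * p^(j+1) * q^(k+1-(j+1)))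
        = ((k:ℝ)+1) * p * ((k.choose j : ℝ) * p^j * q^(k-j)) := by
      intro j hj
      have hnat := Nat.add_one_mul_choose_eq k j
      have hcast : ((j:ℝ)+1) * ((k+1).choose (j+1) : ℝ) = ((k:ℝ)+1) * (k.choose j : ℝ) := by
        have := congrArg (Nat.cast : ℕ → ℝ) hnat
        push_cast at this ⊢
        linarith [this]
      have hexp : k + 1 - (j+1) = k - j := by omega
      rw [hexp]
      calc ((j+1 : ℕ):ℝ) * (((k+1).choose (j+1) : ℝ) * p^(j+1) * q^(k-j))
          = (((j:ℝ)+1) * ((k+1).choose (j+1) : ℝ)) * (p^(j+1) * q^(k-j)) := by push_cast; ring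
        _ = (((k:ℝ)+1) * (k.choose j : ℝ)) * (p^(j+1) * q^(k-j)) := by rw [hcast]
        _ = ((k:ℝ)+1) * p * ((k.choose j : ℝ) * p^j * q^(k-j)) := by rw [pow_succ]; ring
    rw [Finset.sum_congr rfl step, ← Finset.mul_sum, sumB p q h k]
    push_cast
    ring

lemma sum_i2B (p q : ℝ) (h : p + q = 1) (m : ℕ) :
    ∑ i ∈ range (m+1), (i:ℝ) * ((i:ℝ)-1) * ((m.choose i : ℝ) * p^i * q^(m-i))
      = m * ((m:ℝ)-1) * p^2 := by
  cases m with
  | zero => simp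
  | succ k =>
    rw [Finset.sum_range_succ']
    have step : ∀ j ∈ range (k+1),
        ((j+1 : ℕ):ℝ) * (((j+1:ℕ):ℝ)-1) * (((k+1).choose (j+1) : ℝ) * p^(j+1) * q^(k+1-(j+1)))
        = ((k:ℝ)+1) * p * ((j:ℝ) * ((k.choose j : ℝ) * p^j * q^(k-j))) := by
      intro j hj
      have hnat := Nat.add_one_mul_choose_eq k j
      have hcast : ((j:ℝ)+1) * ((k+1).choose (j+1) : ℝ) = ((k:ℝ)+1) * (k.choose j : ℝ) := by
        have := congrArg (Nat.cast : ℕ → ℝ) hnat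
        push_cast at this ⊢
        linarith [this]
      have hexp : k + 1 - (j+1) = k - j := by omega
      rw [hexp]
      calc ((j+1 : ℕ):ℝ) * (((j+1:ℕ):ℝ)-1) * (((k+1).choose (j+1) : ℝ) * p^(j+1) * q^(k-j))
          = (((j:ℝ)+1) * ((k+1).choose (j+1) : ℝ)) * ((j:ℝ) * (p^(j+1) * q^(k-j))) := by
            push_cast; ring
        _ = (((k:ℝ)+1) * (k.choose j : ℝ)) * ((j:ℝ) * (p^(j+1) * q^(k-j))) := by rw [hcast]
        _ = ((k:ℝ)+1) * p * ((j:ℝ) * ((k.choose j : ℝ) * p^j * q^(k-j))) := by rw [pow_succ]; ring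
    rw [Finset.sum_congr rfl step, ← Finset.mul_sum, sum_iB p q h k]
    push_cast
    ring

lemma varB (p q : ℝ) (h : p + q = 1) (m : ℕ) :
    ∑ i ∈ range (m+1), ((i:ℝ) - m*p)^2 * ((m.choose i : ℝ) * p^i * q^(m-i)) = m * p * q := by
  have e : ∀ i ∈ range (m+1), ((i:ℝ) - m*p)^2 * ((m.choose i : ℝ) * p^i * q^(m-i))
      = (i:ℝ)*((i:ℝ)-1) * ((m.choose i : ℝ) * p^i * q^(m-i))
        + (1 - 2*m*p) * ((i:ℝ) * ((m.choose i : ℝ) * p^i * q^(m-i)))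
        + (m*p)^2 * ((m.choose i : ℝ) * p^i * q^(m-i)) := by
    intro i _; ring
  rw [Finset.sum_congr rfl e, Finset.sum_add_distrib, Finset.sum_add_distrib,
    ← Finset.mul_sum, ← Finset.mul_sum, sumB p q h, sum_iB p q h, sum_i2B p q h]
  have hq : q = 1 - p := by linarith
  rw [hq]; ring

lemma natid (n i : ℕ) (hi : i ≤ n) : (n+1 - i) * (n+1).choose i = (n+1) * n.choose i := by
  have h1 := Nat.add_one_mul_choose_eq n (n - i)
  rw [Nat.choose_symm hi] at h1
  have h2 : (n+1).choose (n - i + 1) = (n+1).choose i := by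
    rw [← Nat.choose_symm (by omega : n - i + 1 ≤ n + 1)]
    congr 1
    omega
  rw [h2] at h1
  rw [show n + 1 - i = n - i + 1 by omega]
  linarith [h1]

lemma keyI (p q : ℝ) (n i : ℕ) (hi : i ≤ n+1) :
    ((n:ℝ)+1) * q * ((n.choose i : ℝ) * p^i * q^(n-i))
      = (((n:ℝ)+1) - i) * (((n+1).choose i : ℝ) * p^i * q^(n+1-i)) := by
  rcases Nat.lt_or_ge i (n+1) with hlt | hge
  · have hin : i ≤ n := by omega
    have hc := natid n i hin
    have hcast : (((n:ℝ)+1) - i) * (((n+1).choose i : ℝ)) = ((n:ℝ)+1) * (n.choose i : ℝ) := by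
      have := congrArg (Nat.cast : ℕ → ℝ) hc
      push_cast [Nat.cast_sub (by omega : i ≤ n+1)] at this
      linarith [this]
    have hexp : n + 1 - i = (n - i) + 1 := by omega
    rw [hexp, pow_succ]
    calc ((n:ℝ)+1) * q * ((n.choose i : ℝ) * p^i * q^(n-i))
        = (((n:ℝ)+1) * (n.choose i : ℝ)) * (p^i * q^(n-i) * q) := by ring
      _ = ((((n:ℝ)+1) - i) * (((n+1).choose i : ℝ))) * (p^i * q^(n-i) * q) := by rw [hcast]
      _ = (((n:ℝ)+1) - i) * (((n+1).choose i : ℝ) * p^i * (q^(n-i) * q)) := by ring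
  · have hi' : i = n+1 := by omega
    subst hi'
    simp [Nat.choose_succ_self]

lemma absdiff (p q : ℝ) (hp : 0 < p) (hq0 : 0 < q) (h : p + q = 1) (n i : ℕ) (hi : i ≤ n+1) :
    |(n.choose i : ℝ) * p^i * q^(n-i) - ((n+1).choose i : ℝ) * p^i * q^(n+1-i)|
      = (((n+1).choose i : ℝ) * p^i * q^(n+1-i)) * |(i:ℝ) - (((n:ℝ)+1)*p)| / (((n:ℝ)+1)*q) := by
  have hd : (0:ℝ) < ((n:ℝ)+1)*q := by positivity
  have k := keyI p q n i hi
  have E : (n.choose i : ℝ) * p^i * q^(n-i) - ((n+1).choose i : ℝ) * p^i * q^(n+1-i)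
      = (((n+1).choose i : ℝ) * p^i * q^(n+1-i)) * (((n:ℝ)+1)*p - i) / (((n:ℝ)+1)*q) := by
    rw [eq_div_iff hd.ne']
    linear_combination k - (((n+1).choose i : ℝ) * p^i * q^(n+1-i)) * ((n:ℝ)+1) * h
  rw [E, abs_div, abs_of_pos hd, abs_mul,
    abs_of_nonneg (by positivity : (0:ℝ) ≤ ((n+1).choose i : ℝ) * p^i * q^(n+1-i)),
    abs_sub_comm]

/-- For `0 < p < 1` and `q = 1 − p`, the total variation distance between the binomial
distributions with parameters `(n,p)` and `(n+1,p)`, namely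
`Σ_{i=0}^{n+1} |C(n,i) p^i q^{n−i} − C(n+1,i) p^i q^{n+1−i}|`, tends to `0` as `n → ∞`
(with the convention `C(n,i) = 0` for `i > n`, automatic for `Nat.choose`). -/
theorem stmt7 (p q : ℝ) (hp : 0 < p) (hp1 : p < 1) (hq : q = 1 - p) :
    Tendsto (fun n : ℕ =>
        ∑ i ∈ Finset.range (n + 2),
          |(n.choose i : ℝ) * p ^ i * q ^ (n - i)
            - ((n + 1).choose i : ℝ) * p ^ i * q ^ (n + 1 - i)|)
      atTop (𝓝 0) := by
  have hq0 : 0 < q := by rw [hq]; linarith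
  have h : p + q = 1 := by rw [hq]; ring
  apply squeeze_zero (g := fun n : ℕ => Real.sqrt (p / (((n:ℝ)+1)*q)))
  · intro n
    exact Finset.sum_nonneg fun i _ => abs_nonneg _
  · intro n
    have hd : (0:ℝ) < ((n:ℝ)+1)*q := by positivity
    -- rewrite the sum using absdiff
    have e1 : ∑ i ∈ Finset.range (n + 2),
          |(n.choose i : ℝ) * p ^ i * q ^ (n - i)
            - ((n + 1).choose i : ℝ) * p ^ i * q ^ (n + 1 - i)|
        = (∑ i ∈ Finset.range (n + 2),
            (((n+1).choose i : ℝ) * p^i * q^(n+1-i)) * |(i:ℝ) - (((n:ℝ)+1)*p)|) / (((n:ℝ)+1)*q) := by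
      rw [Finset.sum_div]
      refine Finset.sum_congr rfl fun i hi => ?_
      have hi' : i ≤ n + 1 := by simpa using Nat.lt_succ_iff.mp (Finset.mem_range.mp hi)
      exact absdiff p q hp hq0 h n i hi'
    rw [e1]
    -- Cauchy-Schwarz bound on the numerator
    set a : ℕ → ℝ := fun i => Real.sqrt (((n+1).choose i : ℝ) * p^i * q^(n+1-i)) with ha
    set b : ℕ → ℝ := fun i => Real.sqrt (((n+1).choose i : ℝ) * p^i * q^(n+1-i)) * |(i:ℝ) - (((n:ℝ)+1)*p)| with hb
    have CS := Finset.sum_mul_sq_le_sq_mul_sq (Finset.range (n+2)) a b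
    have hab : ∀ i ∈ Finset.range (n+2), a i * b i
        = (((n+1).choose i : ℝ) * p^i * q^(n+1-i)) * |(i:ℝ) - (((n:ℝ)+1)*p)| := by
      intro i _
      have hBnn : (0:ℝ) ≤ ((n+1).choose i : ℝ) * p^i * q^(n+1-i) := by positivity
      simp only [ha, hb]
      rw [← mul_assoc, Real.mul_self_sqrt hBnn]
    have ha2 : ∀ i ∈ Finset.range (n+2), a i ^ 2 = ((n+1).choose i : ℝ) * p^i * q^(n+1-i) := by
      intro i _
      exact Real.sq_sqrt (by positivity)
    have hb2 : ∀ i ∈ Finset.range (n+2), b i ^ 2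
        = ((i:ℝ) - ((n+1:ℕ):ℝ)*p)^2 * (((n+1).choose i : ℝ) * p^i * q^(n+1-i)) := by
      intro i _
      simp only [hb]
      rw [mul_pow, Real.sq_sqrt (by positivity), sq_abs]
      push_cast
      ring
    rw [Finset.sum_congr rfl hab, Finset.sum_congr rfl ha2, Finset.sum_congr rfl hb2] at CS
    have hsum1 : ∑ i ∈ Finset.range (n+2), ((n+1).choose i : ℝ) * p^i * q^(n+1-i) = 1 :=
      sumB p q h (n+1)
    have hvar : ∑ i ∈ Finset.range (n+2), ((i:ℝ) - ((n+1:ℕ):ℝ)*p)^2 * (((n+1).choose i : ℝ) * p^i * q^(n+1-i))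
        = ((n:ℝ)+1) * p * q := by
      have := varB p q h (n+1)
      push_cast at this ⊢
      convert this using 2
    rw [hsum1, hvar, one_mul] at CS
    -- so numerator ≤ sqrt((n+1)pq)
    have hnum_nn : (0:ℝ) ≤ ∑ i ∈ Finset.range (n + 2),
        (((n+1).choose i : ℝ) * p^i * q^(n+1-i)) * |(i:ℝ) - (((n:ℝ)+1)*p)| :=
      Finset.sum_nonneg fun i _ => by positivity
    have hnum : ∑ i ∈ Finset.range (n + 2),
        (((n+1).choose i : ℝ) * p^i * q^(n+1-i)) * |(i:ℝ) - (((n:ℝ)+1)*p)|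
        ≤ Real.sqrt (((n:ℝ)+1) * p * q) := by
      rw [← Real.sqrt_sq hnum_nn]
      exact Real.sqrt_le_sqrt CS
    have step : (∑ i ∈ Finset.range (n + 2),
            (((n+1).choose i : ℝ) * p^i * q^(n+1-i)) * |(i:ℝ) - (((n:ℝ)+1)*p)|) / (((n:ℝ)+1)*q)
        ≤ Real.sqrt (((n:ℝ)+1) * p * q) / (((n:ℝ)+1)*q) := by
      gcongr
    refine step.trans_eq ?_
    -- sqrt((n+1)pq)/((n+1)q) = sqrt(p/((n+1)q))
    have hrw : p / (((n:ℝ)+1)*q) = (((n:ℝ)+1) * p * q) / ((((n:ℝ)+1)*q)^2) := by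
      field_simp
    rw [hrw, Real.sqrt_div (by positivity), Real.sqrt_sq hd.le]
  · have hinner : Tendsto (fun n : ℕ => p / (((n:ℝ)+1)*q)) atTop (𝓝 0) := by
      apply Tendsto.div_atTop (tendsto_const_nhds)
      apply Filter.Tendsto.atTop_mul_const hq0
      exact tendsto_atTop_add_const_right _ 1 tendsto_natCast_atTop_atTop
    have := (Real.continuous_sqrt.tendsto 0).comp hinner
    simpa [Function.comp_def] using this
end
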